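/- Let n ≥ 1, let V be a finite nonempty type, let β : V → V → ZMod n → ℂ, and let c₁, c₂, c₃, c₄ : ℂ. Define: the lift matrix L : Matrix (V × ZMod n) (V × ZMod n) ℂ by L (u,i) (v,j) = β u v (j − i); the degree function deg : V → ℂ by deg u = Σ_v Σ_s β u v s; the lifted degree matrix D̃ : Matrix (V × ZMod n) (V × ZMod n) ℂ, diagonal with D̃ (u,i) (u,i) = deg u; the universal adjacency matrix of the lift U := c₁·L + c₂·D̃ + c₃·1 + c₄·J, where J is the all-ones matrix on V × ZMod n; for m : ZMod n, the character images B_m : Matrix V V ℂ, (B_m) u v = Σ_s exp(2·π·Complex.I·(m.val·s.val)/n) · β u v s; the base degree matrix D : Matrix V V ℂ, diagonal with D u u = deg u; and the all-ones matrix J_V on V. Then the characteristic polynomial of U equals the characteristic polynomial of c₁·B₀ + c₂·D + c₃·1 + c₄·(n:ℂ)·J_V times the product over all m ≠ 0 of the characteristic polynomials of c₁·B_m + c₂·D + c₃·1. -/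

import Mathlib

open Matrix Polynomial Finset

section Aux

set_option linter.unusedSectionVars false

variable {N : Type*} [Fintype N] [DecidableEq N]

lemma myCharpoly_conj (F G A : Matrix N N ℂ) (h1 : F * G = 1) :
    (F * A * G).charpoly = A.charpoly := by
  have hch : charmatrix (F * A * G) = F.map C * charmatrix A * G.map C := by
    simp only [charmatrix, Matrix.sub_mul, Matrix.mul_sub, RingHom.mapMatrix_apply]
    congr 1
    · symm
      rw [← (scalar_commute (X : ℂ[X]) (fun r => Commute.all _ r) (F.map C)).eq,
        Matrix.mul_assoc, ← Matrix.map_mul, h1, Matrix.map_one _ (map_zero C) (map_one C),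
        Matrix.mul_one]
    · rw [← Matrix.map_mul, ← Matrix.map_mul]
  have hFG : (F.map (C : ℂ →+* ℂ[X])).det * (G.map (C : ℂ →+* ℂ[X])).det = 1 := by
    rw [← det_mul, ← Matrix.map_mul, h1, Matrix.map_one _ (map_zero C) (map_one C), det_one]
  rw [Matrix.charpoly, Matrix.charpoly, hch, det_mul, det_mul]
  rw [mul_comm, ← mul_assoc, mul_comm ((G.map C).det) ((F.map C).det), hFG, one_mul]

lemma myCharpoly_blockDiagonal {ι : Type*} [Fintype ι] [DecidableEq ι]
    (M : ι → Matrix N N ℂ) :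
    (Matrix.blockDiagonal M).charpoly = ∏ k, (M k).charpoly := by
  have hch : charmatrix (blockDiagonal M) = blockDiagonal fun k => charmatrix (M k) := by
    ext ⟨i, k⟩ ⟨j, l⟩
    by_cases h : k = l
    · subst h
      by_cases h2 : i = j
      · subst h2
        simp [charmatrix_apply, blockDiagonal_apply, diagonal_apply, map_apply]
      · simp [charmatrix_apply, blockDiagonal_apply, diagonal_apply, map_apply,
          Prod.ext_iff, h2]
    · simp [charmatrix_apply, blockDiagonal_apply, diagonal_apply, map_apply,
        Prod.ext_iff, h]
  rw [Matrix.charpoly, hch, det_blockDiagonal]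
  rfl

variable {n : ℕ} [NeZero n] {ζ : ℂ}

lemma zeta_val_mod (hζ : ζ ^ n = 1) (a : ℕ) : ζ ^ (a % n) = ζ ^ a :=
  (pow_eq_pow_mod a hζ).symm

lemma zeta_val_add (hζ : ζ ^ n = 1) (a b : ZMod n) :
    ζ ^ (a + b).val = ζ ^ a.val * ζ ^ b.val := by
  rw [ZMod.val_add, zeta_val_mod hζ, pow_add]

lemma zeta_val_mul (hζ : ζ ^ n = 1) (a b : ZMod n) :
    ζ ^ (a * b).val = ζ ^ (a.val * b.val) := by
  rw [ZMod.val_mul, zeta_val_mod hζ]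

lemma zeta_sum (hζ : IsPrimitiveRoot ζ n) (k : ZMod n) :
    ∑ j : ZMod n, ζ ^ (j * k).val = if k = 0 then (n : ℂ) else 0 := by
  have hζ1 : ζ ^ n = 1 := hζ.pow_eq_one
  by_cases hk : k = 0
  · simp [hk]
  · rw [if_neg hk]
    set x : ℂ := ζ ^ k.val with hx
    have hxn : x ^ n = 1 := by
      rw [hx, ← pow_mul, mul_comm, pow_mul, hζ1, one_pow]
    have hx1 : x ≠ 1 :=
      hζ.pow_ne_one_of_pos_of_lt (ZMod.val_pos.mpr hk).ne' (ZMod.val_lt k)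
    have hrw : ∀ j : ZMod n, ζ ^ (j * k).val = x ^ j.val := by
      intro j
      rw [zeta_val_mul hζ1, hx, ← pow_mul, mul_comm k.val j.val, pow_mul]
    simp only [hrw]
    set S : ℂ := ∑ j : ZMod n, x ^ j.val with hS
    have hshift : S * x = S := by
      rw [hS, Finset.sum_mul]
      have hn1 : 1 < n := by
        have h1 := ZMod.val_pos.mpr hk
        have h2 := ZMod.val_lt k
        omega
      haveI : Fact (1 < n) := ⟨hn1⟩
      have : ∀ j : ZMod n, x ^ j.val * x = x ^ ((j + 1 : ZMod n)).val := by
        intro j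
        rw [zeta_val_add hxn j 1, ZMod.val_one, pow_one]
      simp only [this]
      exact Fintype.sum_equiv (Equiv.addRight (1 : ZMod n)) _ _ (fun j => rfl)
    have : S * (x - 1) = 0 := by rw [mul_sub, mul_one, hshift, sub_self]
    rcases mul_eq_zero.mp this with h | h
    · exact h
    · exact absurd (sub_eq_zero.mp h) hx1

lemma sum_prod_ite_left {α ι : Type*} [Fintype α] [DecidableEq α] [Fintype ι]
    (u : α) (g : α → ι → ℂ) :
    ∑ q : α × ι, (if u = q.1 then g q.1 q.2 else 0) = ∑ j : ι, g u j := by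
  rw [Fintype.sum_prod_type]
  have h : ∀ w : α, (∑ j : ι, if u = w then g w j else 0)
      = if u = w then ∑ j : ι, g w j else 0 := by
    intro w; split <;> simp
  simp_rw [h]
  simp

lemma sum_prod_ite_right {α ι : Type*} [Fintype α] [DecidableEq α] [Fintype ι]
    (v : α) (g : α → ι → ℂ) :
    ∑ q : α × ι, (if q.1 = v then g q.1 q.2 else 0) = ∑ j : ι, g v j := by
  rw [Fintype.sum_prod_type]
  have h : ∀ w : α, (∑ j : ι, if w = v then g w j else 0)
      = if w = v then ∑ j : ι, g w j else 0 := by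
    intro w; split <;> simp
  simp_rw [h]
  simp

end Aux

theorem charpoly_universal_lift_zmod (n : ℕ) [NeZero n] (hn : 1 ≤ n)
    (V : Type) [Fintype V] [Nonempty V] [DecidableEq V]
    (β : V → V → ZMod n → ℂ) (c₁ c₂ c₃ c₄ : ℂ)
    (L : Matrix (V × ZMod n) (V × ZMod n) ℂ)
    (hL : ∀ (u v : V) (i j : ZMod n), L (u, i) (v, j) = β u v (j - i))
    (deg : V → ℂ) (hdeg : ∀ u : V, deg u = ∑ v : V, ∑ s : ZMod n, β u v s)
    (D' : Matrix (V × ZMod n) (V × ZMod n) ℂ)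
    (hD' : D' = Matrix.diagonal fun p : V × ZMod n => deg p.1)
    (J : Matrix (V × ZMod n) (V × ZMod n) ℂ)
    (hJ : ∀ p q : V × ZMod n, J p q = 1)
    (U : Matrix (V × ZMod n) (V × ZMod n) ℂ)
    (hU : U = c₁ • L + c₂ • D' + c₃ • (1 : Matrix (V × ZMod n) (V × ZMod n) ℂ) + c₄ • J)
    (B : ZMod n → Matrix V V ℂ)
    (hB : ∀ (m : ZMod n) (u v : V), B m u v =
      ∑ s : ZMod n,
        Complex.exp (2 * Real.pi * Complex.I * ((m.val : ℂ) * (s.val : ℂ)) / (n : ℂ)) *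
          β u v s)
    (D : Matrix V V ℂ) (hD : D = Matrix.diagonal deg)
    (JV : Matrix V V ℂ) (hJV : ∀ u v : V, JV u v = 1) :
    U.charpoly =
      (c₁ • B 0 + c₂ • D + c₃ • (1 : Matrix V V ℂ) + (c₄ * (n : ℂ)) • JV).charpoly *
        ∏ m ∈ Finset.univ \ {(0 : ZMod n)},
          (c₁ • B m + c₂ • D + c₃ • (1 : Matrix V V ℂ)).charpoly := by
  classical
  set ζ : ℂ := Complex.exp (2 * Real.pi * Complex.I / n) with hζdef
  have hprim : IsPrimitiveRoot ζ n := Complex.isPrimitiveRoot_exp n (NeZero.ne n)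
  have hζ1 : ζ ^ n = 1 := hprim.pow_eq_one
  have hnne : (n : ℂ) ≠ 0 := Nat.cast_ne_zero.mpr (NeZero.ne n)
  have hexp : ∀ m s : ZMod n,
      Complex.exp (2 * Real.pi * Complex.I * ((m.val : ℂ) * (s.val : ℂ)) / (n : ℂ))
        = ζ ^ (m * s).val := by
    intro m s
    rw [zeta_val_mul hζ1, hζdef, ← Complex.exp_nat_mul]
    congr 1
    push_cast
    field_simp
  set F : Matrix (V × ZMod n) (V × ZMod n) ℂ :=
    Matrix.of (fun p q => if p.1 = q.1 then ζ ^ (p.2 * q.2).val else 0) with hF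
  set G : Matrix (V × ZMod n) (V × ZMod n) ℂ :=
    Matrix.of (fun p q => if p.1 = q.1 then (n : ℂ)⁻¹ * ζ ^ (-(p.2 * q.2)).val else 0) with hG
  set blk : ZMod n → Matrix V V ℂ := fun m =>
    c₁ • B m + c₂ • D + c₃ • (1 : Matrix V V ℂ) +
      (if m = 0 then (c₄ * (n : ℂ)) • JV else 0) with hblk
  -- F * G = 1
  have hFG : F * G = 1 := by
    ext ⟨u, i⟩ ⟨v, m⟩
    rw [Matrix.mul_apply]
    have : ∀ q : V × ZMod n, F (u, i) q * G q (v, m)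
        = if u = q.1 then
            (if q.1 = v then ζ ^ ((i * q.2).val) * ((n : ℂ)⁻¹ * ζ ^ ((-(q.2 * m)).val)) else 0)
          else 0 := by
      intro q
      simp only [hF, hG, Matrix.of_apply]
      split <;> split <;> ring
    rw [Finset.sum_congr rfl fun q _ => this q,
      sum_prod_ite_left u (fun w j =>
        if w = v then ζ ^ ((i * j).val) * ((n : ℂ)⁻¹ * ζ ^ ((-(j * m)).val)) else 0)]
    by_cases huv : u = v
    · subst huv
      simp only [if_pos rfl, if_true, eq_self_iff_true]
      have hcomb : ∀ j : ZMod n,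
          ζ ^ ((i * j).val) * ((n : ℂ)⁻¹ * ζ ^ ((-(j * m)).val))
            = (n : ℂ)⁻¹ * ζ ^ ((j * (i - m)).val) := by
        intro j
        have harg : (j : ZMod n) * (i - m) = i * j + -(j * m) := by ring
        rw [harg, zeta_val_add hζ1]
        ring
      rw [Finset.sum_congr rfl fun j _ => hcomb j, ← Finset.mul_sum, zeta_sum hprim]
      rw [Matrix.one_apply]
      by_cases him : i = m
      · subst him
        rw [if_pos (sub_self i ▸ rfl), if_pos rfl, inv_mul_cancel₀ hnne]
      · rw [if_neg (fun h => him (sub_eq_zero.mp h)),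
          if_neg (fun h => him (by injection h)), mul_zero]
    · simp only [if_neg huv, Finset.sum_const_zero]
      rw [Matrix.one_apply, if_neg (fun h => huv (by injection h))]
  -- key intertwining identity
  have key : U * F = F * Matrix.blockDiagonal blk := by
    ext ⟨u, i⟩ ⟨v, m⟩
    -- RHS
    have hRHS : (F * Matrix.blockDiagonal blk) (u, i) (v, m)
        = ζ ^ ((i * m).val) * blk m u v := by
      rw [Matrix.mul_apply]
      have : ∀ q : V × ZMod n, F (u, i) q * Matrix.blockDiagonal blk q (v, m)
          = if u = q.1 then
              (if q.2 = m then ζ ^ ((i * q.2).val) * blk q.2 q.1 v else 0) else 0 := by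
        intro q
        simp only [hF, Matrix.of_apply, Matrix.blockDiagonal_apply]
        split <;> split <;> ring
      rw [Finset.sum_congr rfl fun q _ => this q,
        sum_prod_ite_left u (fun w j => if j = m then ζ ^ ((i * j).val) * blk j w v else 0)]
      simp
    rw [hRHS, Matrix.mul_apply]
    have hterm : ∀ q : V × ZMod n, U (u, i) q * F q (v, m)
        = if q.1 = v then U (u, i) (v, q.2) * ζ ^ ((q.2 * m).val) else 0 := by
      intro q
      simp only [hF, Matrix.of_apply]
      split
      · rename_i h; rw [show q = (v, q.2) by rw [← h]]
      · rw [mul_zero]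
    rw [Finset.sum_congr rfl fun q _ => hterm q,
      sum_prod_ite_right v (fun w j => U (u, i) (v, j) * ζ ^ ((j * m).val))]
    have hUapp : ∀ j : ZMod n, U (u, i) (v, j)
        = c₁ * β u v (j - i) + c₂ * (if u = v ∧ i = j then deg u else 0)
          + c₃ * (if u = v ∧ i = j then 1 else 0) + c₄ := by
      intro j
      rw [hU]
      simp only [Matrix.add_apply, Matrix.smul_apply, smul_eq_mul, hL, hD', hJ,
        Matrix.diagonal_apply, Matrix.one_apply, mul_one]
      by_cases h : u = v
      · subst h
        by_cases h2 : i = j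
        · subst h2
          simp
        · simp [Prod.ext_iff, h2]
      · simp [Prod.ext_iff, h]
    simp only [hUapp]
    have hsplit : ∑ j : ZMod n,
        (c₁ * β u v (j - i) + c₂ * (if u = v ∧ i = j then deg u else 0)
          + c₃ * (if u = v ∧ i = j then 1 else 0) + c₄) * ζ ^ ((j * m).val)
        = c₁ * (∑ j : ZMod n, β u v (j - i) * ζ ^ ((j * m).val))
          + c₂ * (∑ j : ZMod n, (if u = v ∧ i = j then deg u else 0) * ζ ^ ((j * m).val))
          + c₃ * (∑ j : ZMod n, (if u = v ∧ i = j then (1 : ℂ) else 0) * ζ ^ ((j * m).val))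
          + c₄ * (∑ j : ZMod n, ζ ^ ((j * m).val)) := by
      simp only [Finset.mul_sum]
      rw [← Finset.sum_add_distrib, ← Finset.sum_add_distrib, ← Finset.sum_add_distrib]
      exact Finset.sum_congr rfl fun j _ => by ring
    rw [hsplit]
    -- piece 1
    have h1 : ∑ j : ZMod n, β u v (j - i) * ζ ^ ((j * m).val)
        = ζ ^ ((i * m).val) * B m u v := by
      have hre : ∑ j : ZMod n, β u v (j - i) * ζ ^ ((j * m).val)
          = ∑ s : ZMod n, β u v s * ζ ^ (((s + i) * m).val) := by
        refine Fintype.sum_equiv (Equiv.subRight i) _ _ fun j => ?_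
        simp [Equiv.subRight]
      rw [hre, hB]
      rw [Finset.mul_sum]
      refine Finset.sum_congr rfl fun s _ => ?_
      rw [hexp]
      have harg : (s + i) * m = i * m + m * s := by ring
      rw [harg, zeta_val_add hζ1]
      ring
    -- piece 2
    have h2 : ∑ j : ZMod n, (if u = v ∧ i = j then deg u else 0) * ζ ^ ((j * m).val)
        = ζ ^ ((i * m).val) * D u v := by
      by_cases h : u = v
      · subst h
        simp only [true_and]
        rw [Finset.sum_eq_single i]
        · rw [if_pos rfl, hD, Matrix.diagonal_apply_eq, mul_comm]
        · intro j _ hji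
          rw [if_neg (fun h => hji h.symm), zero_mul]
        · intro h; exact absurd (Finset.mem_univ i) h
      · simp only [h, false_and, if_false, zero_mul, Finset.sum_const_zero]
        rw [hD, Matrix.diagonal_apply_ne _ h, mul_zero]
    -- piece 3
    have h3 : ∑ j : ZMod n, (if u = v ∧ i = j then (1 : ℂ) else 0) * ζ ^ ((j * m).val)
        = ζ ^ ((i * m).val) * (1 : Matrix V V ℂ) u v := by
      by_cases h : u = v
      · subst h
        simp only [true_and, Matrix.one_apply_eq, mul_one]
        rw [Finset.sum_eq_single i]
        · rw [if_pos rfl, one_mul]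
        · intro j _ hji
          rw [if_neg (fun h => hji h.symm), zero_mul]
        · intro h; exact absurd (Finset.mem_univ i) h
      · simp [h, Matrix.one_apply]
    -- sum of roots
    have h4 : ∑ j : ZMod n, ζ ^ ((j * m).val) = if m = 0 then (n : ℂ) else 0 :=
      zeta_sum hprim m
    rw [h1, h2, h3, h4, hblk]
    simp only [Matrix.add_apply, Matrix.smul_apply, smul_eq_mul]
    by_cases hm : m = 0
    · subst hm
      simp only [if_pos rfl, eq_self_iff_true, if_true, Matrix.smul_apply, smul_eq_mul, hJV]
      have h0 : (i * (0 : ZMod n)).val = 0 := by simp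
      rw [h0, pow_zero]
      ring
    · simp only [if_neg hm, Matrix.zero_apply, mul_zero, add_zero]
      ring
  -- conclude
  have hU2 : U = F * Matrix.blockDiagonal blk * G := by
    calc U = U * (F * G) := by rw [hFG, Matrix.mul_one]
    _ = U * F * G := by rw [Matrix.mul_assoc]
    _ = F * Matrix.blockDiagonal blk * G := by rw [key]
  rw [hU2, myCharpoly_conj _ _ _ hFG, myCharpoly_blockDiagonal]
  rw [Finset.prod_eq_mul_prod_sdiff_singleton_of_mem (Finset.mem_univ (0 : ZMod n))]
  congr 1
  · rw [hblk]
    simp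
  · refine Finset.prod_congr rfl fun m hm => ?_
    rw [hblk]
    simp only
    rw [if_neg (by simpa using (Finset.mem_sdiff.mp hm).2), add_zero]
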